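/- Let n ≥ 2 and let f be the rotation map f(x) = (x₁ cos θ − x₂ sin θ, x₂ cos θ + x₁ sin θ, x₃, …, xₙ) with θ = log(x₁² + x₂²). Then at every point x with x₁² + x₂² > 0, the derivative A = f′(x) satisfies ‖A‖ = 1 + √2 and l(A) = √2 − 1; consequently H_I(A) = H_O(A) = (1 + √2)ⁿ. -/

import Mathlib

open Metric

/-- The rotation map
`f(x) = (x₁ cos θ − x₂ sin θ, x₂ cos θ + x₁ sin θ, x₃, …, xₙ)` with
`θ = log (x₁² + x₂²)`. -/
noncomputable def rotMap (n : ℕ) (hn : 2 ≤ n)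
    (x : EuclideanSpace ℝ (Fin n)) : EuclideanSpace ℝ (Fin n) :=
  (WithLp.equiv 2 (Fin n → ℝ)).symm fun i =>
    let θ : ℝ := Real.log (x ⟨0, by omega⟩ ^ 2 + x ⟨1, by omega⟩ ^ 2)
    if (i : ℕ) = 0 then
      x ⟨0, by omega⟩ * Real.cos θ - x ⟨1, by omega⟩ * Real.sin θ
    else if (i : ℕ) = 1 then
      x ⟨1, by omega⟩ * Real.cos θ + x ⟨0, by omega⟩ * Real.sin θ
    else x i

/-- `l(A) = min_{|h|=1} |A h|`. -/
noncomputable def minNorm (n : ℕ)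
    (A : EuclideanSpace ℝ (Fin n) →L[ℝ] EuclideanSpace ℝ (Fin n)) : ℝ :=
  sInf ((fun h => ‖A h‖) '' sphere (0 : EuclideanSpace ℝ (Fin n)) 1)

/-- Inner dilatation coefficient `H_I(A) = |det A| / l(A)^n`. -/
noncomputable def innerDil (n : ℕ)
    (A : EuclideanSpace ℝ (Fin n) →L[ℝ] EuclideanSpace ℝ (Fin n)) : ℝ :=
  |LinearMap.det (A : EuclideanSpace ℝ (Fin n) →ₗ[ℝ] EuclideanSpace ℝ (Fin n))| /
    (minNorm n A) ^ n

/-- Outer dilatation coefficient `H_O(A) = ‖A‖^n / |det A|`. -/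
noncomputable def outerDil (n : ℕ)
    (A : EuclideanSpace ℝ (Fin n) →L[ℝ] EuclideanSpace ℝ (Fin n)) : ℝ :=
  ‖A‖ ^ n /
    |LinearMap.det (A : EuclideanSpace ℝ (Fin n) →ₗ[ℝ] EuclideanSpace ℝ (Fin n))|

open Real
variable {n : ℕ}

private def idx0 (hn : 2 ≤ n) : Fin n := ⟨0, by omega⟩
private def idx1 (hn : 2 ≤ n) : Fin n := ⟨1, by omega⟩

noncomputable def prj (i : Fin n) : EuclideanSpace ℝ (Fin n) →L[ℝ] ℝ :=
  PiLp.proj 2 _ i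

@[simp] lemma prj_apply (i : Fin n) (y : EuclideanSpace ℝ (Fin n)) : prj i y = y i := by
  simp [prj]

noncomputable def Th (hn : 2 ≤ n) (x : EuclideanSpace ℝ (Fin n)) : ℝ :=
  Real.log (x (idx0 hn) ^ 2 + x (idx1 hn) ^ 2)

noncomputable def Dth (hn : 2 ≤ n) (x : EuclideanSpace ℝ (Fin n)) :
    EuclideanSpace ℝ (Fin n) →L[ℝ] ℝ :=
  ((x (idx0 hn) ^ 2 + x (idx1 hn) ^ 2)⁻¹ * (2 * x (idx0 hn))) • prj (idx0 hn)
  + ((x (idx0 hn) ^ 2 + x (idx1 hn) ^ 2)⁻¹ * (2 * x (idx1 hn))) • prj (idx1 hn)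

noncomputable def F0 (hn : 2 ≤ n) (x : EuclideanSpace ℝ (Fin n)) :
    EuclideanSpace ℝ (Fin n) →L[ℝ] ℝ :=
  Real.cos (Th hn x) • prj (idx0 hn)
  - Real.sin (Th hn x) • prj (idx1 hn)
  + (-(x (idx0 hn)) * Real.sin (Th hn x) - x (idx1 hn) * Real.cos (Th hn x)) • Dth hn x

noncomputable def F1 (hn : 2 ≤ n) (x : EuclideanSpace ℝ (Fin n)) :
    EuclideanSpace ℝ (Fin n) →L[ℝ] ℝ :=
  Real.sin (Th hn x) • prj (idx0 hn)
  + Real.cos (Th hn x) • prj (idx1 hn)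
  + (x (idx0 hn) * Real.cos (Th hn x) - x (idx1 hn) * Real.sin (Th hn x)) • Dth hn x

noncomputable def Lmap (hn : 2 ≤ n) (x : EuclideanSpace ℝ (Fin n)) :
    EuclideanSpace ℝ (Fin n) →L[ℝ] EuclideanSpace ℝ (Fin n) :=
  ((EuclideanSpace.equiv (Fin n) ℝ).symm : (Fin n → ℝ) →L[ℝ] EuclideanSpace ℝ (Fin n)).comp
    (ContinuousLinearMap.pi fun i =>
      if (i : ℕ) = 0 then F0 hn x else if (i : ℕ) = 1 then F1 hn x else prj i)

lemma Lmap_apply (hn : 2 ≤ n) (x h : EuclideanSpace ℝ (Fin n)) (i : Fin n) :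
    Lmap hn x h i =
      if (i : ℕ) = 0 then F0 hn x h else if (i : ℕ) = 1 then F1 hn x h else h i := by
  simp [Lmap, apply_ite (fun (f : EuclideanSpace ℝ (Fin n) →L[ℝ] ℝ) => f h)]



lemma hasFDerivAt_rotMap (hn : 2 ≤ n) (x : EuclideanSpace ℝ (Fin n))
    (hx : 0 < x (idx0 hn) ^ 2 + x (idx1 hn) ^ 2) :
    HasFDerivAt (rotMap n hn) (Lmap hn x) x := by
  have h0 : HasFDerivAt (fun y : EuclideanSpace ℝ (Fin n) => y (idx0 hn))
      (prj (idx0 hn)) x := by exact (prj (idx0 hn)).hasFDerivAt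
  have h1 : HasFDerivAt (fun y : EuclideanSpace ℝ (Fin n) => y (idx1 hn))
      (prj (idx1 hn)) x := by exact (prj (idx1 hn)).hasFDerivAt
  have h0sq : HasFDerivAt (fun y : EuclideanSpace ℝ (Fin n) => y (idx0 hn) ^ 2)
      ((2 * x (idx0 hn)) • prj (idx0 hn)) x := by
    simpa [pow_two, two_mul, add_smul] using h0.fun_mul h0
  have h1sq : HasFDerivAt (fun y : EuclideanSpace ℝ (Fin n) => y (idx1 hn) ^ 2)
      ((2 * x (idx1 hn)) • prj (idx1 hn)) x := by
    simpa [pow_two, two_mul, add_smul] using h1.fun_mul h1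
  have hθ : HasFDerivAt (fun y : EuclideanSpace ℝ (Fin n) =>
      Real.log (y (idx0 hn) ^ 2 + y (idx1 hn) ^ 2)) (Dth hn x) x := by
    refine ((h0sq.add h1sq).log (ne_of_gt hx)).congr_fderiv ?_
    ext h
    simp [Dth]
    ring
  have hF0 : HasFDerivAt (fun y : EuclideanSpace ℝ (Fin n) =>
      y (idx0 hn) * Real.cos (Real.log (y (idx0 hn) ^ 2 + y (idx1 hn) ^ 2))
      - y (idx1 hn) * Real.sin (Real.log (y (idx0 hn) ^ 2 + y (idx1 hn) ^ 2)))
      (F0 hn x) x := by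
    refine ((h0.mul hθ.cos).sub (h1.mul hθ.sin)).congr_fderiv ?_
    ext h
    simp [F0, Th]
    ring
  have hF1 : HasFDerivAt (fun y : EuclideanSpace ℝ (Fin n) =>
      y (idx1 hn) * Real.cos (Real.log (y (idx0 hn) ^ 2 + y (idx1 hn) ^ 2))
      + y (idx0 hn) * Real.sin (Real.log (y (idx0 hn) ^ 2 + y (idx1 hn) ^ 2)))
      (F1 hn x) x := by
    refine ((h1.mul hθ.cos).add (h0.mul hθ.sin)).congr_fderiv ?_
    ext h
    simp [F1, Th]
    ring
  have hG : HasFDerivAt (fun (y : EuclideanSpace ℝ (Fin n)) (i : Fin n) =>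
      if (i : ℕ) = 0 then
        y (idx0 hn) * Real.cos (Real.log (y (idx0 hn) ^ 2 + y (idx1 hn) ^ 2))
        - y (idx1 hn) * Real.sin (Real.log (y (idx0 hn) ^ 2 + y (idx1 hn) ^ 2))
      else if (i : ℕ) = 1 then
        y (idx1 hn) * Real.cos (Real.log (y (idx0 hn) ^ 2 + y (idx1 hn) ^ 2))
        + y (idx0 hn) * Real.sin (Real.log (y (idx0 hn) ^ 2 + y (idx1 hn) ^ 2))
      else y i)
      (ContinuousLinearMap.pi fun (i : Fin n) =>
        if (i : ℕ) = 0 then F0 hn x else if (i : ℕ) = 1 then F1 hn x else prj i)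
      x := by
    rw [hasFDerivAt_pi]
    intro i
    by_cases hi0 : (i : ℕ) = 0
    · simpa [hi0] using hF0
    · by_cases hi1 : (i : ℕ) = 1
      · simpa [hi0, hi1] using hF1
      · simp [hi0, hi1]
        exact (prj i).hasFDerivAt
  have := ((EuclideanSpace.equiv (Fin n) ℝ).symm :
      (Fin n → ℝ) →L[ℝ] EuclideanSpace ℝ (Fin n)).hasFDerivAt.comp x hG
  exact this

lemma idx_ne (hn : 2 ≤ n) : idx0 hn ≠ idx1 hn := by
  simp [idx0, idx1, Fin.ext_iff]

lemma normsq (y : EuclideanSpace ℝ (Fin n)) : ‖y‖ ^ 2 = ∑ i, (y i) ^ 2 := by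
  rw [EuclideanSpace.norm_eq, Real.sq_sqrt (by positivity)]
  simp [sq_abs]

lemma sum_split (hn : 2 ≤ n) (F : Fin n → ℝ) :
    ∑ i, F i = F (idx0 hn) + F (idx1 hn)
      + ∑ i ∈ (Finset.univ.erase (idx0 hn)).erase (idx1 hn), F i := by
  rw [add_assoc, Finset.add_sum_erase _ F
      (Finset.mem_erase.2 ⟨(idx_ne hn).symm, Finset.mem_univ _⟩),
    Finset.add_sum_erase _ F (Finset.mem_univ _)]

lemma Lmap_apply_ne (hn : 2 ≤ n) (x h : EuclideanSpace ℝ (Fin n)) (i : Fin n)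
    (hi0 : i ≠ idx0 hn) (hi1 : i ≠ idx1 hn) : Lmap hn x h i = h i := by
  rw [Lmap_apply]
  have h0 : (i : ℕ) ≠ 0 := by simpa [Fin.ext_iff, idx0] using hi0
  have h1 : (i : ℕ) ≠ 1 := by simpa [Fin.ext_iff, idx1] using hi1
  simp [h0, h1]

lemma Lmap_apply0 (hn : 2 ≤ n) (x h : EuclideanSpace ℝ (Fin n)) :
    Lmap hn x h (idx0 hn) = F0 hn x h := by
  rw [Lmap_apply]; simp [idx0]

lemma Lmap_apply1 (hn : 2 ≤ n) (x h : EuclideanSpace ℝ (Fin n)) :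
    Lmap hn x h (idx1 hn) = F1 hn x h := by
  rw [Lmap_apply]; simp [idx1]

/-- Main pointwise norm identity. -/
lemma normL_sq (hn : 2 ≤ n) (x h : EuclideanSpace ℝ (Fin n)) :
    ‖Lmap hn x h‖ ^ 2 = ‖h‖ ^ 2 - (h (idx0 hn)) ^ 2 - (h (idx1 hn)) ^ 2
      + ((F0 hn x h) ^ 2 + (F1 hn x h) ^ 2) := by
  rw [normsq, normsq, sum_split hn (fun i => (Lmap hn x h i) ^ 2),
    sum_split hn (fun i => (h i) ^ 2)]
  have hsum : ∑ i ∈ (Finset.univ.erase (idx0 hn)).erase (idx1 hn), (Lmap hn x h i) ^ 2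
      = ∑ i ∈ (Finset.univ.erase (idx0 hn)).erase (idx1 hn), (h i) ^ 2 := by
    refine Finset.sum_congr rfl fun i hi => ?_
    rw [Lmap_apply_ne hn x h i (Finset.ne_of_mem_erase (Finset.mem_of_mem_erase hi))
      (Finset.ne_of_mem_erase hi)]
  rw [hsum]
  rw [Lmap_apply0, Lmap_apply1]
  ring

lemma sqrt2_facts : Real.sqrt 2 ^ 2 = 2 ∧ 1 ≤ Real.sqrt 2 ∧ Real.sqrt 2 ≤ 3/2 := by
  have h2 : Real.sqrt 2 ^ 2 = 2 := Real.sq_sqrt (by norm_num)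
  have h0 : 0 ≤ Real.sqrt 2 := Real.sqrt_nonneg 2
  refine ⟨h2, by nlinarith, by nlinarith⟩

lemma Dth_eq (hn : 2 ≤ n) (x h : EuclideanSpace ℝ (Fin n))
    (hx : 0 < x (idx0 hn) ^ 2 + x (idx1 hn) ^ 2) :
    Dth hn x h * (x (idx0 hn) ^ 2 + x (idx1 hn) ^ 2)
      = 2 * (x (idx0 hn) * h (idx0 hn) + x (idx1 hn) * h (idx1 hn)) := by
  have hr : (x (idx0 hn) ^ 2 + x (idx1 hn) ^ 2) ≠ 0 := ne_of_gt hx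
  simp [Dth]
  field_simp

lemma plane_eq (hn : 2 ≤ n) (x h : EuclideanSpace ℝ (Fin n)) :
    (F0 hn x h) ^ 2 + (F1 hn x h) ^ 2
      = (h (idx0 hn) - x (idx1 hn) * Dth hn x h) ^ 2
        + (h (idx1 hn) + x (idx0 hn) * Dth hn x h) ^ 2 := by
  have hsc := Real.sin_sq_add_cos_sq (Th hn x)
  simp only [F0, F1, ContinuousLinearMap.add_apply, ContinuousLinearMap.sub_apply,
    ContinuousLinearMap.smul_apply, prj_apply, smul_eq_mul]
  nlinarith [hsc, sq_nonneg (Dth hn x h)]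

/-- The central two–variable estimates. -/
lemma plane_bounds (hn : 2 ≤ n) (x h : EuclideanSpace ℝ (Fin n))
    (hx : 0 < x (idx0 hn) ^ 2 + x (idx1 hn) ^ 2) :
    (3 - 2*Real.sqrt 2) * ((h (idx0 hn)) ^ 2 + (h (idx1 hn)) ^ 2)
        ≤ (F0 hn x h) ^ 2 + (F1 hn x h) ^ 2 ∧
    (F0 hn x h) ^ 2 + (F1 hn x h) ^ 2
        ≤ (3 + 2*Real.sqrt 2) * ((h (idx0 hn)) ^ 2 + (h (idx1 hn)) ^ 2) := by
  obtain ⟨hs2, hs1, -⟩ := sqrt2_facts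
  set s := Real.sqrt 2
  set a := x (idx0 hn); set b := x (idx1 hn)
  set h0 := h (idx0 hn); set h1 := h (idx1 hn)
  set t := Dth hn x h with htdef
  have ht : t * (a ^ 2 + b ^ 2) = 2 * (a * h0 + b * h1) := Dth_eq hn x h hx
  set r2 := a ^ 2 + b ^ 2 with hr2def
  set w := a * h0 + b * h1 with hwdef
  set v := a * h1 - b * h0 with hvdef
  rw [plane_eq hn x h]
  have e1 : r2 * ((h0 - b * t) ^ 2 + (h1 + a * t) ^ 2)
      = (w ^ 2 + v ^ 2) + 4 * w * v + 4 * w ^ 2 := by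
    have expand : r2 * ((h0 - b * t) ^ 2 + (h1 + a * t) ^ 2)
        = r2 * (h0 ^ 2 + h1 ^ 2) + 2 * (t * r2) * v + (t * r2) ^ 2 := by
      rw [hr2def, hvdef]; ring
    rw [expand, ht]
    rw [hr2def, hwdef, hvdef]; ring
  have e2 : r2 * (h0 ^ 2 + h1 ^ 2) = w ^ 2 + v ^ 2 := by
    rw [hr2def, hwdef, hvdef]; ring
  constructor
  · have key : (3 - 2*s) * (w ^ 2 + v ^ 2) ≤ (w ^ 2 + v ^ 2) + 4 * w * v + 4 * w ^ 2 := by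
      nlinarith [mul_nonneg (sub_nonneg.2 hs1) (sq_nonneg ((s+1) * w + v)), hs2]
    have e3 : r2 * ((3 - 2*s) * (h0 ^ 2 + h1 ^ 2)) = (3 - 2*s) * (w ^ 2 + v ^ 2) := by
      rw [← e2]; ring
    have hm : r2 * ((3 - 2*s) * (h0 ^ 2 + h1 ^ 2))
        ≤ r2 * ((h0 - b * t) ^ 2 + (h1 + a * t) ^ 2) := by
      rw [e1, e3]; exact key
    exact le_of_mul_le_mul_left hm hx
  · have key : (w ^ 2 + v ^ 2) + 4 * w * v + 4 * w ^ 2 ≤ (3 + 2*s) * (w ^ 2 + v ^ 2) := by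
      nlinarith [mul_nonneg (sub_nonneg.2 hs1) (sq_nonneg (w - (s+1) * v)), hs2]
    have e3 : r2 * ((3 + 2*s) * (h0 ^ 2 + h1 ^ 2)) = (3 + 2*s) * (w ^ 2 + v ^ 2) := by
      rw [← e2]; ring
    have hm : r2 * ((h0 - b * t) ^ 2 + (h1 + a * t) ^ 2)
        ≤ r2 * ((3 + 2*s) * (h0 ^ 2 + h1 ^ 2)) := by
      rw [e1, e3]; exact key
    exact le_of_mul_le_mul_left hm hx

lemma two_coord_le (hn : 2 ≤ n) (h : EuclideanSpace ℝ (Fin n)) :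
    (h (idx0 hn)) ^ 2 + (h (idx1 hn)) ^ 2 ≤ ‖h‖ ^ 2 := by
  rw [normsq, sum_split hn (fun i => (h i) ^ 2)]
  have : (0:ℝ) ≤ ∑ i ∈ (Finset.univ.erase (idx0 hn)).erase (idx1 hn), (h i) ^ 2 :=
    Finset.sum_nonneg fun i _ => sq_nonneg _
  linarith

lemma sq_le_imp_le {A B : ℝ} (h : A ^ 2 ≤ B ^ 2) (hA : 0 ≤ A) (hB : 0 ≤ B) : A ≤ B := by
  nlinarith

lemma norm_Lmap_le (hn : 2 ≤ n) (x h : EuclideanSpace ℝ (Fin n))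
    (hx : 0 < x (idx0 hn) ^ 2 + x (idx1 hn) ^ 2) :
    ‖Lmap hn x h‖ ≤ (1 + Real.sqrt 2) * ‖h‖ := by
  obtain ⟨hs2, hs1, -⟩ := sqrt2_facts
  have hub := (plane_bounds hn x h hx).2
  have hsq : ‖Lmap hn x h‖ ^ 2 ≤ ((1 + Real.sqrt 2) * ‖h‖) ^ 2 := by
    rw [normL_sq hn x h]
    have h2 := two_coord_le hn h
    nlinarith [hub, hs2, hs1]
  exact sq_le_imp_le hsq (norm_nonneg _) (by positivity)

lemma norm_Lmap_ge (hn : 2 ≤ n) (x h : EuclideanSpace ℝ (Fin n))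
    (hx : 0 < x (idx0 hn) ^ 2 + x (idx1 hn) ^ 2) :
    (Real.sqrt 2 - 1) * ‖h‖ ≤ ‖Lmap hn x h‖ := by
  obtain ⟨hs2, hs1, hs32⟩ := sqrt2_facts
  have hlb := (plane_bounds hn x h hx).1
  have hsq : ((Real.sqrt 2 - 1) * ‖h‖) ^ 2 ≤ ‖Lmap hn x h‖ ^ 2 := by
    rw [normL_sq hn x h]
    have h2 := two_coord_le hn h
    nlinarith [hlb, hs2, hs1, hs32]
  exact sq_le_imp_le hsq (by nlinarith [norm_nonneg h]) (norm_nonneg _)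

noncomputable def gvec (hn : 2 ≤ n) (x : EuclideanSpace ℝ (Fin n)) (β : ℝ) :
    EuclideanSpace ℝ (Fin n) :=
  (WithLp.equiv 2 (Fin n → ℝ)).symm fun i =>
    if (i : ℕ) = 0 then x (idx0 hn) - β * x (idx1 hn)
    else if (i : ℕ) = 1 then x (idx1 hn) + β * x (idx0 hn) else 0

lemma gvec_apply0 (hn : 2 ≤ n) (x : EuclideanSpace ℝ (Fin n)) (β : ℝ) :
    gvec hn x β (idx0 hn) = x (idx0 hn) - β * x (idx1 hn) := rfl

lemma gvec_apply (hn : 2 ≤ n) (x : EuclideanSpace ℝ (Fin n)) (β : ℝ) (i : Fin n) :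
    gvec hn x β i = if (i : ℕ) = 0 then x (idx0 hn) - β * x (idx1 hn)
      else if (i : ℕ) = 1 then x (idx1 hn) + β * x (idx0 hn) else 0 := rfl

lemma gvec_apply1 (hn : 2 ≤ n) (x : EuclideanSpace ℝ (Fin n)) (β : ℝ) :
    gvec hn x β (idx1 hn) = x (idx1 hn) + β * x (idx0 hn) := by
  rw [gvec_apply]; simp [idx1]

lemma gvec_apply_ne (hn : 2 ≤ n) (x : EuclideanSpace ℝ (Fin n)) (β : ℝ) (i : Fin n)
    (hi0 : i ≠ idx0 hn) (hi1 : i ≠ idx1 hn) : gvec hn x β i = 0 := by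
  have h0 : (i : ℕ) ≠ 0 := by simpa [Fin.ext_iff, idx0] using hi0
  have h1 : (i : ℕ) ≠ 1 := by simpa [Fin.ext_iff, idx1] using hi1
  show (if (i : ℕ) = 0 then _ else if (i : ℕ) = 1 then _ else (0:ℝ)) = 0
  simp [h0, h1]

lemma gvec_norm_sq (hn : 2 ≤ n) (x : EuclideanSpace ℝ (Fin n)) (β : ℝ) :
    ‖gvec hn x β‖ ^ 2 = (1 + β ^ 2) * (x (idx0 hn) ^ 2 + x (idx1 hn) ^ 2) := by
  rw [normsq, sum_split hn (fun i => (gvec hn x β i) ^ 2)]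
  have hz : ∑ i ∈ (Finset.univ.erase (idx0 hn)).erase (idx1 hn), (gvec hn x β i) ^ 2 = 0 := by
    refine Finset.sum_eq_zero fun i hi => ?_
    rw [gvec_apply_ne hn x β i (Finset.ne_of_mem_erase (Finset.mem_of_mem_erase hi))
      (Finset.ne_of_mem_erase hi)]
    norm_num
  rw [hz, gvec_apply0, gvec_apply1]
  ring

lemma Dth_gvec (hn : 2 ≤ n) (x : EuclideanSpace ℝ (Fin n)) (β : ℝ)
    (hx : 0 < x (idx0 hn) ^ 2 + x (idx1 hn) ^ 2) :
    Dth hn x (gvec hn x β) = 2 := by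
  have := Dth_eq hn x (gvec hn x β) hx
  rw [gvec_apply0, gvec_apply1] at this
  have hr : (x (idx0 hn) ^ 2 + x (idx1 hn) ^ 2) ≠ 0 := ne_of_gt hx
  have h2 : Dth hn x (gvec hn x β) * (x (idx0 hn) ^ 2 + x (idx1 hn) ^ 2)
      = 2 * (x (idx0 hn) ^ 2 + x (idx1 hn) ^ 2) := by linear_combination this
  exact mul_right_cancel₀ hr h2

lemma norm_Lmap_gvec_sq (hn : 2 ≤ n) (x : EuclideanSpace ℝ (Fin n)) (β : ℝ)
    (hx : 0 < x (idx0 hn) ^ 2 + x (idx1 hn) ^ 2) :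
    ‖Lmap hn x (gvec hn x β)‖ ^ 2
      = (1 + (β + 2) ^ 2) * (x (idx0 hn) ^ 2 + x (idx1 hn) ^ 2) := by
  rw [normL_sq hn x (gvec hn x β), plane_eq hn x (gvec hn x β), Dth_gvec hn x β hx,
    gvec_norm_sq hn x β, gvec_apply0, gvec_apply1]
  ring

lemma exists_unit_vec (hn : 2 ≤ n) (x : EuclideanSpace ℝ (Fin n)) (β c : ℝ)
    (hx : 0 < x (idx0 hn) ^ 2 + x (idx1 hn) ^ 2) (hc : 0 ≤ c)
    (hcsq : (1 + (β + 2) ^ 2) = c ^ 2 * (1 + β ^ 2)) :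
    ∃ h : EuclideanSpace ℝ (Fin n), ‖h‖ = 1 ∧ ‖Lmap hn x h‖ = c := by
  set g := gvec hn x β with hg
  have hgsq := gvec_norm_sq hn x β
  have hLgsq := norm_Lmap_gvec_sq hn x β hx
  have hgpos : 0 < ‖g‖ := by
    have h2 : 0 < ‖g‖ ^ 2 := by rw [hgsq]; positivity
    nlinarith [norm_nonneg g]
  have hLg : ‖Lmap hn x g‖ = c * ‖g‖ := by
    have hsq : ‖Lmap hn x g‖ ^ 2 = (c * ‖g‖) ^ 2 := by
      rw [hLgsq, mul_pow, hgsq, hcsq]; ring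
    have := sq_le_imp_le (le_of_eq hsq) (norm_nonneg _) (by positivity)
    have := sq_le_imp_le (le_of_eq hsq.symm) (by positivity) (norm_nonneg _)
    linarith
  refine ⟨‖g‖⁻¹ • g, ?_, ?_⟩
  · rw [norm_smul]
    simp [abs_of_pos (inv_pos.2 hgpos), inv_mul_cancel₀ (ne_of_gt hgpos)]
  · rw [map_smul, norm_smul, hLg]
    simp [abs_of_pos (inv_pos.2 hgpos)]
    field_simp
  
lemma opNorm_Lmap (hn : 2 ≤ n) (x : EuclideanSpace ℝ (Fin n))
    (hx : 0 < x (idx0 hn) ^ 2 + x (idx1 hn) ^ 2) :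
    ‖Lmap hn x‖ = 1 + Real.sqrt 2 := by
  obtain ⟨hs2, hs1, -⟩ := sqrt2_facts
  refine le_antisymm (ContinuousLinearMap.opNorm_le_bound _ (by positivity)
    (fun h => norm_Lmap_le hn x h hx)) ?_
  obtain ⟨h, hh1, hhL⟩ := exists_unit_vec hn x (Real.sqrt 2 - 1) (1 + Real.sqrt 2) hx
    (by positivity) (by nlinarith)
  calc 1 + Real.sqrt 2 = ‖Lmap hn x h‖ := hhL.symm
    _ ≤ ‖Lmap hn x‖ * ‖h‖ := (Lmap hn x).le_opNorm h
    _ = ‖Lmap hn x‖ := by rw [hh1, mul_one]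

lemma minNorm_Lmap (hn : 2 ≤ n) (x : EuclideanSpace ℝ (Fin n))
    (hx : 0 < x (idx0 hn) ^ 2 + x (idx1 hn) ^ 2) :
    sInf ((fun h => ‖Lmap hn x h‖) '' Metric.sphere (0 : EuclideanSpace ℝ (Fin n)) 1)
      = Real.sqrt 2 - 1 := by
  obtain ⟨hs2, hs1, -⟩ := sqrt2_facts
  obtain ⟨h, hh1, hhL⟩ := exists_unit_vec hn x (-(Real.sqrt 2 + 1)) (Real.sqrt 2 - 1) hx
    (by linarith) (by nlinarith)
  have hmem : h ∈ Metric.sphere (0 : EuclideanSpace ℝ (Fin n)) 1 := by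
    simpa [mem_sphere_iff_norm] using hh1
  refine le_antisymm ?_ ?_
  · exact csInf_le ⟨0, fun y ⟨z, _, hz⟩ => hz ▸ norm_nonneg _⟩ ⟨h, hmem, hhL⟩
  · refine le_csInf ⟨_, ⟨h, hmem, rfl⟩⟩ ?_
    rintro y ⟨z, hz, rfl⟩
    have hz1 : ‖z‖ = 1 := by simpa [mem_sphere_iff_norm] using hz
    have := norm_Lmap_ge hn x z hx
    rw [hz1, mul_one] at this
    exact this

lemma det_Lmap (hn : 2 ≤ n) (x : EuclideanSpace ℝ (Fin n))
    (hx : 0 < x (idx0 hn) ^ 2 + x (idx1 hn) ^ 2) :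
    LinearMap.det ((Lmap hn x : EuclideanSpace ℝ (Fin n) →ₗ[ℝ]
      EuclideanSpace ℝ (Fin n))) = 1 := by
  classical
  set bb := PiLp.basisFun 2 ℝ (Fin n) with hbb
  rw [← LinearMap.det_toMatrix bb]
  set a := x (idx0 hn) with ha
  set b := x (idx1 hn) with hb
  set C := Real.cos (Th hn x) with hC
  set S := Real.sin (Th hn x) with hS
  set r2 := a ^ 2 + b ^ 2 with hr2
  set ta : ℝ := r2⁻¹ * (2 * a) with hta
  set tb : ℝ := r2⁻¹ * (2 * b) with htb
  set c : ℝ := -a * S - b * C with hc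
  set d : ℝ := a * C - b * S with hd
  -- the 2x2 "block minus identity" data
  set A : Matrix (Fin n) (Fin 2) ℝ := fun i k =>
    if i = idx0 hn then (if k = 0 then C + c * ta - 1 else -S + c * tb)
    else if i = idx1 hn then (if k = 0 then S + d * ta else C + d * tb - 1)
    else 0 with hA
  set B : Matrix (Fin 2) (Fin n) ℝ := fun k j =>
    if j = idx0 hn then (if k = 0 then 1 else 0)
    else if j = idx1 hn then (if k = 1 then 1 else 0) else 0 with hB
  -- single-vector images
  have hsingle0 : ∀ j : Fin n, (EuclideanSpace.single j (1:ℝ)) (idx0 hn)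
      = if j = idx0 hn then 1 else 0 := by
    intro j
    rw [EuclideanSpace.single_apply]
    simp [eq_comm]
  have hsingle1 : ∀ j : Fin n, (EuclideanSpace.single j (1:ℝ)) (idx1 hn)
      = if j = idx1 hn then 1 else 0 := by
    intro j
    rw [EuclideanSpace.single_apply]
    simp [eq_comm]
  have hM : LinearMap.toMatrix bb bb (Lmap hn x : EuclideanSpace ℝ (Fin n) →ₗ[ℝ]
      EuclideanSpace ℝ (Fin n)) = 1 + A * B := by
    ext i j
    rw [LinearMap.toMatrix_apply, PiLp.basisFun_repr, PiLp.basisFun_apply]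
    rw [ContinuousLinearMap.coe_coe]
    have hone : (1 : Matrix (Fin n) (Fin n) ℝ) i j = if i = j then 1 else 0 :=
      Matrix.one_apply
    have hABij : (A * B) i j = A i 0 * B 0 j + A i 1 * B 1 j := by
      rw [Matrix.mul_apply, Fin.sum_univ_two]
    have hsingle : PiLp.single 2 j (1:ℝ)
        = EuclideanSpace.single j (1:ℝ) := rfl
    rw [hsingle]
    by_cases hi0 : i = idx0 hn
    · subst hi0
      rw [Lmap_apply0]
      simp only [F0, ContinuousLinearMap.add_apply, ContinuousLinearMap.sub_apply,
        ContinuousLinearMap.smul_apply, prj_apply, smul_eq_mul, Dth,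
        ContinuousLinearMap.add_apply, ContinuousLinearMap.smul_apply, prj_apply]
      rw [hsingle0 j, hsingle1 j]
      rw [Matrix.add_apply, hone, hABij, hA, hB]
      by_cases hj0 : j = idx0 hn
      · subst hj0
        simp [idx_ne hn, (idx_ne hn).symm, hc, hta, htb, hr2, hC, hS, ha, hb]
      · by_cases hj1 : j = idx1 hn
        · subst hj1
          simp [idx_ne hn, (idx_ne hn).symm, hc, hta, htb, hr2, hC, hS, ha, hb]
        · simp [hj0, hj1, Ne.symm hj0, Ne.symm hj1, idx_ne hn, (idx_ne hn).symm]
    · by_cases hi1 : i = idx1 hn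
      · subst hi1
        rw [Lmap_apply1]
        simp only [F1, ContinuousLinearMap.add_apply,
          ContinuousLinearMap.smul_apply, prj_apply, smul_eq_mul, Dth]
        rw [hsingle0 j, hsingle1 j]
        rw [Matrix.add_apply, hone, hABij, hA, hB]
        by_cases hj0 : j = idx0 hn
        · subst hj0
          simp [idx_ne hn, (idx_ne hn).symm, hd, hta, htb, hr2, hC, hS, ha, hb]
        · by_cases hj1 : j = idx1 hn
          · subst hj1
            simp [idx_ne hn, (idx_ne hn).symm, hd, hta, htb, hr2, hC, hS, ha, hb]
          · simp [hj0, hj1, Ne.symm hj0, Ne.symm hj1, idx_ne hn, (idx_ne hn).symm]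
      · rw [Lmap_apply_ne hn x _ i hi0 hi1]
        rw [Matrix.add_apply, hone, hABij, hA, hB]
        rw [EuclideanSpace.single_apply]
        simp [hi0, hi1, eq_comm]
  rw [hM, Matrix.det_one_add_mul_comm]
  have hBA : B * A = fun k l =>
      if k = 0 then A (idx0 hn) l else A (idx1 hn) l := by
    ext k l
    rw [Matrix.mul_apply]
    rw [hB]
    fin_cases k
    · rw [Finset.sum_eq_single (idx0 hn)]
      · simp
      · intro j _ hj; simp [hj]
      · intro hj; exact absurd (Finset.mem_univ _) hj
    · rw [Finset.sum_eq_single (idx1 hn)]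
      · simp [(idx_ne hn).symm]
      · intro j _ hj
        by_cases hj0 : j = idx0 hn <;> simp [hj0, hj]
      · intro hj; exact absurd (Finset.mem_univ _) hj
  rw [hBA]
  rw [Matrix.det_fin_two]
  have hr2ne : r2 ≠ 0 := ne_of_gt hx
  have hsc : S ^ 2 + C ^ 2 = 1 := Real.sin_sq_add_cos_sq (Th hn x)
  erw [Matrix.add_apply, Matrix.add_apply, Matrix.add_apply, Matrix.add_apply]
  simp only [Matrix.one_apply, hA]
  simp [idx_ne hn, (idx_ne hn).symm]
  field_simp [hta, htb, hc, hd]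
  linear_combination hsc

theorem rotMap_dilatations (n : ℕ) (hn : 2 ≤ n)
    (x : EuclideanSpace ℝ (Fin n))
    (hx : 0 < x ⟨0, by omega⟩ ^ 2 + x ⟨1, by omega⟩ ^ 2) :
    ‖fderiv ℝ (rotMap n hn) x‖ = 1 + Real.sqrt 2 ∧
    minNorm n (fderiv ℝ (rotMap n hn) x) = Real.sqrt 2 - 1 ∧
    innerDil n (fderiv ℝ (rotMap n hn) x) = (1 + Real.sqrt 2) ^ n ∧
    outerDil n (fderiv ℝ (rotMap n hn) x) = (1 + Real.sqrt 2) ^ n := by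
  have hx' : 0 < x (idx0 hn) ^ 2 + x (idx1 hn) ^ 2 := hx
  have hD : fderiv ℝ (rotMap n hn) x = Lmap hn x := (hasFDerivAt_rotMap hn x hx').fderiv
  obtain ⟨hs2, hs1, -⟩ := sqrt2_facts
  have hmin : minNorm n (Lmap hn x) = Real.sqrt 2 - 1 := minNorm_Lmap hn x hx'
  have hdet := det_Lmap hn x hx'
  rw [hD]
  refine ⟨opNorm_Lmap hn x hx', hmin, ?_, ?_⟩
  · rw [innerDil, hmin, hdet, abs_one]
    have hpos : (0:ℝ) < Real.sqrt 2 - 1 := by nlinarith [hs2, hs1]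
    rw [eq_comm, eq_div_iff (pow_ne_zero _ (ne_of_gt hpos))]
    rw [← mul_pow, (by nlinarith : (1 + Real.sqrt 2) * (Real.sqrt 2 - 1) = 1), one_pow]
  · rw [outerDil, opNorm_Lmap hn x hx', hdet, abs_one, div_one]
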